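/- There is no quasi-metric space on four points defined by a directed graph whose betweenness is isomorphic to the betweenness of Q(4). That is, for every strongly connected digraph on a four-element vertex set W, with ρ(x,y) the length of a shortest directed path from x to y, the betweenness B(ρ) is not isomorphic to B(Q(4)) = {(p,q,r), (r,p,q), (s,q,p), (q,p,s)}. -/
import Mathlib


/-- A quasi-metric on `V`: nonnegative, vanishing exactly on the diagonal,
and satisfying the (directed) triangle inequality. -/
def IsQuasiMetric {V : Type*} (d : V → V → ℝ) : Prop :=
  (∀ x y, 0 ≤ d x y) ∧ (∀ x y, d x y = 0 ↔ x = y) ∧ (∀ x y z, d x z ≤ d x y + d y z)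

/-- Betweenness: `y` lies between `x` and `z` (all three pairwise distinct). -/
def BtwQM {V : Type*} (d : V → V → ℝ) (x y z : V) : Prop :=
  x ≠ y ∧ y ≠ z ∧ x ≠ z ∧ d x z = d x y + d y z

/-- The line through `x` and `y`. -/
def lineQM {V : Type*} (d : V → V → ℝ) (x y : V) : Set V :=
  {z | d z y = d z x + d x y ∨ d x y = d x z + d z y ∨ d x z = d x y + d y z}

/-- The set of all lines of the space. -/
def linesQM {V : Type*} (d : V → V → ℝ) : Set (Set V) :=
  {ℓ | ∃ x y, x ≠ y ∧ ℓ = lineQM d x y}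

/-- The four points of the space `Q(4)`. -/
inductive P4 : Type
  | p | s | q | r
deriving DecidableEq

open P4

/-- The quasi-metric of the space `Q(4)`. -/
def dQ4 : P4 → P4 → ℝ
  | p, p => 0 | p, s => 1 | p, q => 1 | p, r => 3
  | s, p => 3 | s, s => 0 | s, q => 2 | s, r => 3
  | q, p => 1 | q, s => 2 | q, q => 0 | q, r => 2
  | r, p => 1 | r, s => 1 | r, q => 2 | r, r => 0

/-- The betweenness of `Q(4)`. -/
def BQ4 : Set (P4 × P4 × P4) := {(p, q, r), (r, p, q), (s, q, p), (q, p, s)}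

/-- A directed walk of length `n` from `x` to `y` in the digraph with arc relation `A`. -/
def HasWalk {W : Type*} (A : W → W → Prop) (x y : W) (n : ℕ) : Prop :=
  ∃ f : Fin (n + 1) → W, f 0 = x ∧ f (Fin.last n) = y ∧
    ∀ i : Fin n, A (f i.castSucc) (f i.succ)

/-- The distance in a digraph: the length of a shortest directed walk. -/
noncomputable def digraphDist {W : Type*} (A : W → W → Prop) (x y : W) : ℝ :=
  (sInf {n : ℕ | HasWalk A x y n} : ℕ)


section
variable {W : Type*} {A : W → W → Prop}

lemma hasWalk_zero (x : W) : HasWalk A x x 0 :=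
  ⟨fun _ => x, rfl, rfl, fun i => i.elim0⟩

lemma hasWalk_zero_eq {x y : W} (h : HasWalk A x y 0) : x = y := by
  obtain ⟨f, h0, hl, -⟩ := h
  rw [← h0, ← hl]; rfl

lemma hasWalk_one {x y : W} (h : A x y) : HasWalk A x y 1 := by
  refine ⟨fun i => if i.val = 0 then x else y, by simp, by simp [Fin.last], fun i => ?_⟩
  have : i = 0 := Subsingleton.elim _ _
  subst this
  simpa [Fin.castSucc, Fin.succ] using h

lemma hasWalk_concat {x y z : W} {m n : ℕ} (h1 : HasWalk A x y m) (h2 : HasWalk A y z n) :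
    HasWalk A x z (m + n) := by
  obtain ⟨f, f0, fl, fa⟩ := h1
  obtain ⟨g, g0, gl, ga⟩ := h2
  have fy : f ⟨m, by omega⟩ = y := fl
  have gy : g ⟨0, by omega⟩ = y := g0
  refine ⟨fun i => if h : i.val ≤ m then f ⟨i.val, by omega⟩ else g ⟨i.val - m, by omega⟩,
    by simp [f0], ?_, fun i => ?_⟩
  · by_cases hn : n = 0
    · subst hn
      have hyz : y = z := by rw [← g0, ← gl]; rfl
      simp only [Fin.last]
      rw [dif_pos (by omega : m + 0 ≤ m)]
      exact fy.trans hyz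
    · simp only [Fin.last]
      rw [dif_neg (by omega : ¬ (m + n ≤ m))]
      rw [show (⟨m + n - m, by omega⟩ : Fin (n + 1)) = Fin.last n by ext; simp, gl]
  · have hc : (i.castSucc).val = i.val := rfl
    have hs : (i.succ).val = i.val + 1 := rfl
    simp only [hc, hs]
    rcases lt_trichotomy i.val m with hlt | heq | hgt
    · rw [dif_pos (by omega), dif_pos (by omega)]
      have := fa ⟨i.val, by omega⟩
      convert this using 2 <;> ext <;> simp [Fin.castSucc, Fin.succ, Fin.castAdd, Fin.castLE]
    · rw [dif_pos (by omega), dif_neg (by omega)]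
      have hn : 0 < n := by omega
      have := ga ⟨0, hn⟩
      rw [show (⟨i.val, by omega⟩ : Fin (m + 1)) = ⟨m, by omega⟩ by ext; simp; omega, fy, ← gy]
      convert this using 2 <;> ext <;> simp [Fin.castSucc, Fin.succ, Fin.castAdd, Fin.castLE] <;> omega
    · rw [dif_neg (by omega), dif_neg (by omega)]
      have := ga ⟨i.val - m, by omega⟩
      convert this using 2 <;> ext <;> simp [Fin.castSucc, Fin.succ, Fin.castAdd, Fin.castLE] <;> omega

lemma hasWalk_tail {x z : W} {n : ℕ} (h : HasWalk A x z (n + 1)) :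
    ∃ y, HasWalk A x y 1 ∧ HasWalk A y z n := by
  obtain ⟨f, f0, fl, fa⟩ := h
  refine ⟨f 1, hasWalk_one ?_, fun i => f ⟨i.val + 1, by omega⟩, ?_, ?_, fun i => ?_⟩
  · have := fa ⟨0, by omega⟩
    rw [← f0]
    convert this using 2 <;> ext <;> simp [Fin.castSucc, Fin.succ, Fin.castAdd, Fin.castLE]
  · show f ⟨(0 : Fin (n + 1)).val + 1, by omega⟩ = f 1
    congr 1
  · rw [← fl]; congr 1
  · have := fa ⟨i.val + 1, by omega⟩
    convert this using 2 <;> ext <;> simp [Fin.castSucc, Fin.succ, Fin.castAdd, Fin.castLE]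
end

section
variable {W : Type*} {A : W → W → Prop} (hconn : ∀ x y : W, ∃ n : ℕ, HasWalk A x y n)
include hconn

lemma nd_mem (x y : W) : HasWalk A x y (sInf {n : ℕ | HasWalk A x y n}) :=
  Nat.sInf_mem (hconn x y)

lemma nd_le {x y : W} {n : ℕ} (h : HasWalk A x y n) :
    sInf {n : ℕ | HasWalk A x y n} ≤ n := Nat.sInf_le h

lemma nd_ne_zero {x y : W} (h : x ≠ y) : sInf {n : ℕ | HasWalk A x y n} ≠ 0 := by
  intro h0
  exact h (hasWalk_zero_eq (h0 ▸ nd_mem hconn x y))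

lemma exists_mid {x z : W} (hxz : x ≠ z)
    (h1 : sInf {n : ℕ | HasWalk A x z n} ≠ 1) :
    ∃ y, BtwQM (digraphDist A) x y z := by
  obtain ⟨k, hk⟩ : ∃ k, sInf {n : ℕ | HasWalk A x z n} = k + 2 := by
    have := nd_ne_zero hconn hxz
    exact ⟨sInf {n : ℕ | HasWalk A x z n} - 2, by omega⟩
  have hw := nd_mem hconn x z
  rw [hk] at hw
  obtain ⟨y, hxy, hyz⟩ := hasWalk_tail hw
  have l1 : sInf {n : ℕ | HasWalk A x y n} ≤ 1 := nd_le hconn hxy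
  have l2 : sInf {n : ℕ | HasWalk A y z n} ≤ k + 1 := nd_le hconn hyz
  have l3 : k + 2 ≤ sInf {n : ℕ | HasWalk A x y n} + sInf {n : ℕ | HasWalk A y z n} := by
    rw [← hk]
    exact nd_le hconn (hasWalk_concat (nd_mem hconn x y) (nd_mem hconn y z))
  have e1 : sInf {n : ℕ | HasWalk A x y n} = 1 := by omega
  have e2 : sInf {n : ℕ | HasWalk A y z n} = k + 1 := by omega
  have hxy' : x ≠ y := by
    rintro rfl
    have := nd_le hconn (hasWalk_zero (A := A) x)
    omega
  have hyz' : y ≠ z := by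
    rintro rfl
    have := nd_le hconn (hasWalk_zero (A := A) y)
    omega
  refine ⟨y, hxy', hyz', hxz, ?_⟩
  simp only [digraphDist, hk, e1, e2]
  push_cast
  ring

end

/-- no quasi-metric space on four points defined by a (strongly
connected) directed graph has a betweenness isomorphic to that of `Q(4)`. -/
theorem stmt_6 (W : Type) [Fintype W] (hW : Fintype.card W = 4)
    (A : W → W → Prop) (hconn : ∀ x y : W, ∃ n : ℕ, HasWalk A x y n) :
    ¬ ∃ f : P4 ≃ W, ∀ x y z : P4,
        (x, y, z) ∈ BQ4 ↔ BtwQM (digraphDist A) (f x) (f y) (f z) := by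
  rintro ⟨f, h⟩
  have hfne : ∀ {u v : P4}, u ≠ v → f u ≠ f v := fun h' => f.injective.ne h'
  have key : ∀ u w : P4, u ≠ w → (∀ v : P4, (u, v, w) ∉ BQ4) →
      sInf {n : ℕ | HasWalk A (f u) (f w) n} = 1 := by
    intro u w huw hno
    by_contra h1
    obtain ⟨y, hy⟩ := exists_mid hconn (hfne huw) h1
    have := (h u (f.symm y) w).mpr (by rwa [f.apply_symm_apply])
    exact hno _ this
  have hpq : sInf {n : ℕ | HasWalk A (f p) (f q) n} = 1 :=
    key p q (by decide) (fun v => by cases v <;> simp [BQ4])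
  have hqr : sInf {n : ℕ | HasWalk A (f q) (f r) n} = 1 :=
    key q r (by decide) (fun v => by cases v <;> simp [BQ4])
  have hps : sInf {n : ℕ | HasWalk A (f p) (f s) n} = 1 :=
    key p s (by decide) (fun v => by cases v <;> simp [BQ4])
  have hsr : sInf {n : ℕ | HasWalk A (f s) (f r) n} = 1 :=
    key s r (by decide) (fun v => by cases v <;> simp [BQ4])
  have hbtw : BtwQM (digraphDist A) (f p) (f q) (f r) :=
    (h p q r).mp (by simp [BQ4])
  have dac : digraphDist A (f p) (f r) = 2 := by
    rw [hbtw.2.2.2]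
    simp [digraphDist, hpq, hqr]
    norm_num
  have : (p, s, r) ∈ BQ4 := (h p s r).mpr
    ⟨hfne (by decide), hfne (by decide), hfne (by decide), by
      rw [dac]
      simp [digraphDist, hps, hsr]
      norm_num⟩
  simp [BQ4] at this
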